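/- With the data fixed as in the context, for every 1 ≤ m ≤ 2n one has F(m) ≤ N^{ m + 1 − c(m) }, where c(m) is the number of blocks B of p∨q with max(B) ≤ m. In particular, |A^{(p,q)}| = F(2n) ≤ N^{ 2n + 1 − |p∨q| }. -/

import Mathlib

open Filter

/-- `(k_s, l_s) = σ_s ∘ ε_s (i_s, j_s)`. -/
def klMap {n N : ℕ} (ε : Fin (2 * n) → Bool) (σ : Fin (2 * n) → Equiv.Perm (Fin N × Fin N))
    (x : (Fin (2 * n) → Fin N) × (Fin (2 * n) → Fin N)) (s : Fin (2 * n)) : Fin N × Fin N :=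
  if ε s then (σ s) (x.1 s, x.2 s) else (σ s) (x.2 s, x.1 s)

/-- The set `A^{(p,q)}` of tuples `(i_1, j_1, …, i_{2n}, j_{2n})` with `j_s = i_{s+1}`
(cyclically, so that `j_{2n} = i_1`), `k_s = k_{p(s)}` and `l_s = l_{q(s)}` for all `s`. -/
def tupleSet (n N : ℕ) (ε : Fin (2 * n) → Bool) (σ : Fin (2 * n) → Equiv.Perm (Fin N × Fin N))
    (p q : Equiv.Perm (Fin (2 * n))) :
    Finset ((Fin (2 * n) → Fin N) × (Fin (2 * n) → Fin N)) :=
  Finset.univ.filter fun x =>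
    (∀ s, x.2 s = x.1 (finRotate (2 * n) s)) ∧
    (∀ s, (klMap ε σ x s).1 = (klMap ε σ x (p s)).1) ∧
    (∀ s, (klMap ε σ x s).2 = (klMap ε σ x (q s)).2)

/-- `F(S)`:  the number of families `(i_s, j_s)_{s ∈ S}` that extend to an element of
`A^{(p,q)}`. -/
def Fcnt (n N : ℕ) (ε : Fin (2 * n) → Bool) (σ : Fin (2 * n) → Equiv.Perm (Fin N × Fin N))
    (p q : Equiv.Perm (Fin (2 * n))) (S : Finset (Fin (2 * n))) : ℕ :=
  ((tupleSet n N ε σ p q).image fun x => fun s : {a // a ∈ S} => (x.1 s.1, x.2 s.1)).card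

/-- The join `p ∨ q` of the two pair partitions, as an equivalence relation. -/
def joinRel {m : ℕ} (p q : Equiv.Perm (Fin m)) : Fin m → Fin m → Prop :=
  Relation.EqvGen fun a b => p a = b ∨ q a = b

/-- `|p ∨ q|`, the number of blocks of the join partition. -/
noncomputable def numBlocks {m : ℕ} (p q : Equiv.Perm (Fin m)) : ℕ :=
  Set.ncard {B : Set (Fin m) | ∃ a, B = {x | joinRel p q a x}}

/-- The set `{1, …, m}` of the paper, in `0`-based indexing: the first `m` indices. -/
def initSeg (n m : ℕ) : Finset (Fin (2 * n)) :=
  Finset.univ.filter fun s => (s : ℕ) < m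

-- helpers
lemma finRotate_val' {M : ℕ} (t : Fin M) (h : t.1 + 1 < M) : (finRotate M t).1 = t.1 + 1 := by
  match M, t with
  | M + 1, t =>
    rw [finRotate_succ_apply, Fin.val_add_one_of_lt]
    simp only [Fin.lt_def, Fin.val_last]
    omega

lemma mem_tupleSet {n N : ℕ} {ε : Fin (2 * n) → Bool} {σ : Fin (2 * n) → Equiv.Perm (Fin N × Fin N)}
    {p q : Equiv.Perm (Fin (2 * n))} {x} :
    x ∈ tupleSet n N ε σ p q ↔
      (∀ s, x.2 s = x.1 (finRotate (2 * n) s)) ∧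
      (∀ s, (klMap ε σ x s).1 = (klMap ε σ x (p s)).1) ∧
      (∀ s, (klMap ε σ x s).2 = (klMap ε σ x (q s)).2) := by
  simp [tupleSet]

lemma klMap_congr {n N : ℕ} {ε : Fin (2 * n) → Bool} {σ : Fin (2 * n) → Equiv.Perm (Fin N × Fin N)}
    {x y : (Fin (2 * n) → Fin N) × (Fin (2 * n) → Fin N)} {s : Fin (2 * n)}
    (h1 : x.1 s = y.1 s) (h2 : x.2 s = y.2 s) : klMap ε σ x s = klMap ε σ y s := by
  unfold klMap; rw [h1, h2]

lemma tupleSet_det {n N : ℕ} {ε : Fin (2 * n) → Bool} {σ : Fin (2 * n) → Equiv.Perm (Fin N × Fin N)}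
    {p q : Equiv.Perm (Fin (2 * n))} {x} (hx : x ∈ tupleSet n N ε σ p q) (s : Fin (2 * n)) :
    (x.1 s, x.2 s) = if ε s
      then (σ s).symm ((klMap ε σ x (p s)).1, (klMap ε σ x (q s)).2)
      else Prod.swap ((σ s).symm ((klMap ε σ x (p s)).1, (klMap ε σ x (q s)).2)) := by
  rw [mem_tupleSet] at hx
  have hk : klMap ε σ x s = ((klMap ε σ x (p s)).1, (klMap ε σ x (q s)).2) := by
    exact Prod.ext (hx.2.1 s) (hx.2.2 s)
  rw [← hk]
  unfold klMap
  cases hε : ε s <;> simp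

lemma mem_initSeg {n m : ℕ} {s : Fin (2 * n)} : s ∈ initSeg n m ↔ (s : ℕ) < m := by
  simp [initSeg]

lemma stepA (n N : ℕ) (ε : Fin (2 * n) → Bool) (σ : Fin (2 * n) → Equiv.Perm (Fin N × Fin N))
    (p q : Equiv.Perm (Fin (2 * n))) (m : ℕ) (hm1 : 1 ≤ m) (hm : m + 1 ≤ 2 * n) :
    Fcnt n N ε σ p q (initSeg n (m + 1)) ≤ N * Fcnt n N ε σ p q (initSeg n m) := by
  have hmlt : m < 2 * n := hm
  have up : ∀ {s : Fin (2 * n)}, s ∈ initSeg n m → s ∈ initSeg n (m + 1) := by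
    intro s hs; rw [mem_initSeg] at *; omega
  have memm : (⟨m, hmlt⟩ : Fin (2 * n)) ∈ initSeg n (m + 1) := by
    rw [mem_initSeg]; exact Nat.lt_succ_self m
  unfold Fcnt
  set T := tupleSet n N ε σ p q with hT
  have key := Finset.card_le_card_of_injOn
    (s := T.image fun x => fun s : {a // a ∈ initSeg n (m + 1)} => (x.1 s.1, x.2 s.1))
    (t := (T.image fun x => fun s : {a // a ∈ initSeg n m} => (x.1 s.1, x.2 s.1)) ×ˢ
      (Finset.univ : Finset (Fin N)))
    (f := fun f => (fun s : {a // a ∈ initSeg n m} => f ⟨s.1, up s.2⟩,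
      (f ⟨⟨m, hmlt⟩, memm⟩).2))
    (by
      intro f hf
      rw [Finset.mem_coe, Finset.mem_image] at hf
      obtain ⟨x, hx, rfl⟩ := hf
      rw [Finset.mem_coe, Finset.mem_product]
      exact ⟨Finset.mem_image.mpr ⟨x, hx, rfl⟩, Finset.mem_univ _⟩)
    (by
      intro f1 hf1 f2 hf2 heq
      simp only [Finset.mem_coe, Finset.mem_image] at hf1 hf2
      obtain ⟨x1, hx1, rfl⟩ := hf1
      obtain ⟨x2, hx2, rfl⟩ := hf2
      simp only [Prod.mk.injEq] at heq
      have hA : ∀ t : Fin (2 * n), (t : ℕ) < m → x1.1 t = x2.1 t ∧ x1.2 t = x2.2 t := by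
        intro t ht
        have := congrFun heq.1 ⟨t, mem_initSeg.mpr ht⟩
        simpa using this
      have hB : x1.2 ⟨m, hmlt⟩ = x2.2 ⟨m, hmlt⟩ := heq.2
      funext s
      have hs : (s.1 : ℕ) < m + 1 := mem_initSeg.mp s.2
      show (x1.1 s.1, x1.2 s.1) = (x2.1 s.1, x2.2 s.1)
      rcases Nat.lt_or_ge (s.1 : ℕ) m with h | h
      · exact Prod.ext (hA _ h).1 (hA _ h).2
      · have hse : s.1 = (⟨m, hmlt⟩ : Fin (2 * n)) := Fin.ext (show (s.1 : ℕ) = m by omega)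
        rw [hse]
        refine Prod.ext ?_ hB
        -- x.1 ⟨m⟩ = x.2 ⟨m-1⟩ via the chain condition
        have hm1' : m - 1 < 2 * n := by omega
        have hrot : finRotate (2 * n) ⟨m - 1, hm1'⟩ = (⟨m, hmlt⟩ : Fin (2 * n)) := by
          apply Fin.ext
          rw [finRotate_val' (⟨m - 1, hm1'⟩ : Fin (2 * n)) (by show m - 1 + 1 < 2 * n; omega)]
          exact (by omega : m - 1 + 1 = m)
        have e1 : x1.1 ⟨m, hmlt⟩ = x1.2 ⟨m - 1, hm1'⟩ := by
          rw [(mem_tupleSet.mp hx1).1 ⟨m - 1, hm1'⟩, hrot]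
        have e2 : x2.1 ⟨m, hmlt⟩ = x2.2 ⟨m - 1, hm1'⟩ := by
          rw [(mem_tupleSet.mp hx2).1 ⟨m - 1, hm1'⟩, hrot]
        show x1.1 ⟨m, hmlt⟩ = x2.1 ⟨m, hmlt⟩
        rw [e1, e2]
        exact (hA ⟨m - 1, hm1'⟩ (by show m - 1 < m; omega)).2)
  calc ((T.image fun x => fun s : {a // a ∈ initSeg n (m + 1)} => (x.1 s.1, x.2 s.1)).card : ℕ)
      ≤ _ := key
    _ = N * (T.image fun x => fun s : {a // a ∈ initSeg n m} => (x.1 s.1, x.2 s.1)).card := by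
        rw [Finset.card_product]
        simp [mul_comm]

lemma stepB (n N : ℕ) (ε : Fin (2 * n) → Bool) (σ : Fin (2 * n) → Equiv.Perm (Fin N × Fin N))
    (p q : Equiv.Perm (Fin (2 * n))) (m : ℕ) (hmlt : m < 2 * n)
    (hpm : ((p ⟨m, hmlt⟩ : Fin (2 * n)) : ℕ) < m) (hqm : ((q ⟨m, hmlt⟩ : Fin (2 * n)) : ℕ) < m) :
    Fcnt n N ε σ p q (initSeg n (m + 1)) ≤ Fcnt n N ε σ p q (initSeg n m) := by
  have up : ∀ {s : Fin (2 * n)}, s ∈ initSeg n m → s ∈ initSeg n (m + 1) := by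
    intro s hs; rw [mem_initSeg] at *; omega
  unfold Fcnt
  set T := tupleSet n N ε σ p q with hT
  apply Finset.card_le_card_of_injOn
    (f := fun f => fun s : {a // a ∈ initSeg n m} => f ⟨s.1, up s.2⟩)
  · intro f hf
    rw [Finset.mem_coe, Finset.mem_image] at hf
    obtain ⟨x, hx, rfl⟩ := hf
    exact Finset.mem_image.mpr ⟨x, hx, rfl⟩
  · intro f1 hf1 f2 hf2 heq
    simp only [Finset.mem_coe, Finset.mem_image] at hf1 hf2
    obtain ⟨x1, hx1, rfl⟩ := hf1
    obtain ⟨x2, hx2, rfl⟩ := hf2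
    have hA : ∀ t : Fin (2 * n), (t : ℕ) < m → x1.1 t = x2.1 t ∧ x1.2 t = x2.2 t := by
      intro t ht
      have := congrFun heq ⟨t, mem_initSeg.mpr ht⟩
      simpa using this
    have hdet : (x1.1 ⟨m, hmlt⟩, x1.2 ⟨m, hmlt⟩) = (x2.1 ⟨m, hmlt⟩, x2.2 ⟨m, hmlt⟩) := by
      rw [tupleSet_det hx1 ⟨m, hmlt⟩, tupleSet_det hx2 ⟨m, hmlt⟩]
      have hkp : klMap ε σ x1 (p ⟨m, hmlt⟩) = klMap ε σ x2 (p ⟨m, hmlt⟩) :=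
        klMap_congr (hA _ hpm).1 (hA _ hpm).2
      have hkq : klMap ε σ x1 (q ⟨m, hmlt⟩) = klMap ε σ x2 (q ⟨m, hmlt⟩) :=
        klMap_congr (hA _ hqm).1 (hA _ hqm).2
      rw [hkp, hkq]
    funext s
    have hs : (s.1 : ℕ) < m + 1 := mem_initSeg.mp s.2
    show (x1.1 s.1, x1.2 s.1) = (x2.1 s.1, x2.2 s.1)
    rcases Nat.lt_or_ge (s.1 : ℕ) m with h | h
    · exact Prod.ext (hA _ h).1 (hA _ h).2
    · have hse : s.1 = (⟨m, hmlt⟩ : Fin (2 * n)) := Fin.ext (show (s.1 : ℕ) = m by omega)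
      rw [hse]
      exact hdet

lemma joinRel_block_eq {M : ℕ} (p q : Equiv.Perm (Fin M)) {a b : Fin M} (h : joinRel p q a b) :
    {x | joinRel p q a x} = {x | joinRel p q b x} := by
  ext y
  simp only [Set.mem_setOf_eq]
  constructor
  · intro hy; exact Relation.EqvGen.trans _ _ _ (Relation.EqvGen.symm _ _ h) hy
  · intro hy; exact Relation.EqvGen.trans _ _ _ h hy


/-- `F(m) ≤ N^{m + 1 - c(m)}` where `c(m)` is the number of blocks `B` of `p ∨ q` with
`max B ≤ m`; in particular `|A^{(p,q)}| = F(2n) ≤ N^{2n + 1 - |p∨q|}` (both stated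
multiplicatively). -/
theorem stmt9 (n N : ℕ) (hn : 1 ≤ n) (hN : 1 ≤ N)
    (ε : Fin (2 * n) → Bool) (σ : Fin (2 * n) → Equiv.Perm (Fin N × Fin N))
    (p q : Equiv.Perm (Fin (2 * n)))
    (hp : Function.Involutive p) (hq : Function.Involutive q)
    (hpf : ∀ s, p s ≠ s) (hqf : ∀ s, q s ≠ s)
    (hpε : ∀ s, ε (p s) ≠ ε s) (hqε : ∀ s, ε (q s) ≠ ε s) :
    (∀ m : ℕ, 1 ≤ m → m ≤ 2 * n →
      Fcnt n N ε σ p q (initSeg n m) *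
          N ^ (Set.ncard {B : Set (Fin (2 * n)) | (∃ a, B = {x | joinRel p q a x}) ∧
            ∀ x ∈ B, (x : ℕ) < m}) ≤ N ^ (m + 1)) ∧
    (tupleSet n N ε σ p q).card * N ^ numBlocks p q ≤ N ^ (2 * n + 1) := by
  have main : ∀ m : ℕ, 1 ≤ m → m ≤ 2 * n →
      Fcnt n N ε σ p q (initSeg n m) *
          N ^ (Set.ncard {B : Set (Fin (2 * n)) | (∃ a, B = {x | joinRel p q a x}) ∧
            ∀ x ∈ B, (x : ℕ) < m}) ≤ N ^ (m + 1) := by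
    intro m hm1
    induction m, hm1 using Nat.le_induction with
    | base =>
      intro _
      have hc : {B : Set (Fin (2 * n)) | (∃ a, B = {x | joinRel p q a x}) ∧
          ∀ x ∈ B, (x : ℕ) < 1} = ∅ := by
        ext B
        simp only [Set.mem_setOf_eq, Set.mem_empty_iff_false, iff_false, not_and]
        rintro ⟨a, rfl⟩ hall
        have h1 := hall a (Relation.EqvGen.refl a)
        have h2 := hall (p a) (Relation.EqvGen.rel _ _ (Or.inl rfl))
        exact hpf a (Fin.ext (by omega))
      rw [hc, Set.ncard_empty, pow_zero, mul_one]
      have hcard : (initSeg n 1).card = 1 := by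
        have hone : initSeg n 1 = {(⟨0, by omega⟩ : Fin (2 * n))} := by
          ext a
          simp only [initSeg, Finset.mem_filter, Finset.mem_univ, true_and,
            Finset.mem_singleton]
          constructor
          · intro h; exact Fin.ext (show (a : ℕ) = 0 by omega)
          · rintro rfl; exact Nat.zero_lt_one
        rw [hone, Finset.card_singleton]
      calc Fcnt n N ε σ p q (initSeg n 1)
          ≤ Fintype.card ({a // a ∈ initSeg n 1} → Fin N × Fin N) := by
            rw [← Finset.card_univ]; exact Finset.card_le_univ _
        _ = N ^ (1 + 1) := by
            rw [Fintype.card_fun, Fintype.card_coe, hcard, Fintype.card_prod,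
              Fintype.card_fin]
            ring
    | succ m hm1 ih =>
      intro hm2
      have IH := ih (by omega)
      have hmlt : m < 2 * n := hm2
      by_cases hcase : ∀ x : Fin (2 * n), joinRel p q ⟨m, hmlt⟩ x → (x : ℕ) < m + 1
      · -- the block of ⟨m⟩ is contained in {0, …, m}
        have hpm : ((p ⟨m, hmlt⟩ : Fin (2 * n)) : ℕ) < m := by
          have h1 := hcase _ (Relation.EqvGen.rel _ _ (Or.inl rfl))
          have h2 : ((p ⟨m, hmlt⟩ : Fin (2 * n)) : ℕ) ≠ m := fun h =>
            hpf ⟨m, hmlt⟩ (Fin.ext h)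
          omega
        have hqm : ((q ⟨m, hmlt⟩ : Fin (2 * n)) : ℕ) < m := by
          have h1 := hcase _ (Relation.EqvGen.rel _ _ (Or.inr rfl))
          have h2 : ((q ⟨m, hmlt⟩ : Fin (2 * n)) : ℕ) ≠ m := fun h =>
            hqf ⟨m, hmlt⟩ (Fin.ext h)
          omega
        have hF := stepB n N ε σ p q m hmlt hpm hqm
        have hcle : Set.ncard {B : Set (Fin (2 * n)) | (∃ a, B = {x | joinRel p q a x}) ∧
            ∀ x ∈ B, (x : ℕ) < m + 1} ≤
            Set.ncard {B : Set (Fin (2 * n)) | (∃ a, B = {x | joinRel p q a x}) ∧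
            ∀ x ∈ B, (x : ℕ) < m} + 1 := by
          have hsub : {B : Set (Fin (2 * n)) | (∃ a, B = {x | joinRel p q a x}) ∧
              ∀ x ∈ B, (x : ℕ) < m + 1} ⊆
              insert {x | joinRel p q ⟨m, hmlt⟩ x}
                {B : Set (Fin (2 * n)) | (∃ a, B = {x | joinRel p q a x}) ∧
                ∀ x ∈ B, (x : ℕ) < m} := by
            rintro B ⟨⟨a, rfl⟩, hall⟩
            by_cases hmem : joinRel p q a ⟨m, hmlt⟩
            · exact Set.mem_insert_iff.mpr (Or.inl (joinRel_block_eq p q hmem))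
            · refine Set.mem_insert_iff.mpr (Or.inr ⟨⟨a, rfl⟩, fun x hx => ?_⟩)
              have hx1 := hall x hx
              by_contra hcon
              have hxm : x = (⟨m, hmlt⟩ : Fin (2 * n)) := Fin.ext (show (x : ℕ) = m by omega)
              exact hmem (hxm ▸ hx)
          calc Set.ncard _ ≤ _ := Set.ncard_le_ncard hsub (Set.toFinite _)
            _ ≤ _ + 1 := Set.ncard_insert_le _ _
        calc Fcnt n N ε σ p q (initSeg n (m + 1)) *
              N ^ (Set.ncard {B : Set (Fin (2 * n)) | (∃ a, B = {x | joinRel p q a x}) ∧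
                ∀ x ∈ B, (x : ℕ) < m + 1})
            ≤ Fcnt n N ε σ p q (initSeg n m) *
              N ^ (Set.ncard {B : Set (Fin (2 * n)) | (∃ a, B = {x | joinRel p q a x}) ∧
                ∀ x ∈ B, (x : ℕ) < m} + 1) :=
              Nat.mul_le_mul hF (Nat.pow_le_pow_right hN hcle)
          _ = Fcnt n N ε σ p q (initSeg n m) *
              N ^ (Set.ncard {B : Set (Fin (2 * n)) | (∃ a, B = {x | joinRel p q a x}) ∧
                ∀ x ∈ B, (x : ℕ) < m}) * N := by ring
          _ ≤ N ^ (m + 1) * N := Nat.mul_le_mul_right N IH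
          _ = N ^ (m + 1 + 1) := (pow_succ N (m + 1)).symm
      · -- the block of ⟨m⟩ contains an element > m
        push_neg at hcase
        obtain ⟨x0, hx0rel, hx0ge⟩ := hcase
        have hF := stepA n N ε σ p q m hm1 hm2
        have hcle : Set.ncard {B : Set (Fin (2 * n)) | (∃ a, B = {x | joinRel p q a x}) ∧
            ∀ x ∈ B, (x : ℕ) < m + 1} ≤
            Set.ncard {B : Set (Fin (2 * n)) | (∃ a, B = {x | joinRel p q a x}) ∧
            ∀ x ∈ B, (x : ℕ) < m} := by
          apply Set.ncard_le_ncard _ (Set.toFinite _)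
          rintro B ⟨⟨a, rfl⟩, hall⟩
          refine ⟨⟨a, rfl⟩, fun x hx => ?_⟩
          have hx1 := hall x hx
          by_contra hcon
          have hxm : x = (⟨m, hmlt⟩ : Fin (2 * n)) := Fin.ext (show (x : ℕ) = m by omega)
          have h1 : joinRel p q a x0 := Relation.EqvGen.trans _ _ _ (hxm ▸ hx) hx0rel
          have := hall x0 h1
          omega
        calc Fcnt n N ε σ p q (initSeg n (m + 1)) *
              N ^ (Set.ncard {B : Set (Fin (2 * n)) | (∃ a, B = {x | joinRel p q a x}) ∧
                ∀ x ∈ B, (x : ℕ) < m + 1})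
            ≤ (N * Fcnt n N ε σ p q (initSeg n m)) *
              N ^ (Set.ncard {B : Set (Fin (2 * n)) | (∃ a, B = {x | joinRel p q a x}) ∧
                ∀ x ∈ B, (x : ℕ) < m}) :=
              Nat.mul_le_mul hF (Nat.pow_le_pow_right hN hcle)
          _ = N * (Fcnt n N ε σ p q (initSeg n m) *
              N ^ (Set.ncard {B : Set (Fin (2 * n)) | (∃ a, B = {x | joinRel p q a x}) ∧
                ∀ x ∈ B, (x : ℕ) < m})) := by ring
          _ ≤ N * N ^ (m + 1) := Nat.mul_le_mul_left N IH
          _ = N ^ (m + 1 + 1) := (pow_succ' N (m + 1)).symm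
  refine ⟨main, ?_⟩
  have key := main (2 * n) (by omega) le_rfl
  have hF : Fcnt n N ε σ p q (initSeg n (2 * n)) = (tupleSet n N ε σ p q).card := by
    unfold Fcnt
    apply Finset.card_image_of_injOn
    intro x1 _ x2 _ heq
    have hA : ∀ t : Fin (2 * n), x1.1 t = x2.1 t ∧ x1.2 t = x2.2 t := by
      intro t
      have ht : t ∈ initSeg n (2 * n) := mem_initSeg.mpr t.isLt
      have := congrFun heq ⟨t, ht⟩
      simpa using this
    exact Prod.ext (funext fun t => (hA t).1) (funext fun t => (hA t).2)
  have hc : {B : Set (Fin (2 * n)) | (∃ a, B = {x | joinRel p q a x}) ∧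
      ∀ x ∈ B, (x : ℕ) < 2 * n} = {B : Set (Fin (2 * n)) | ∃ a, B = {x | joinRel p q a x}} := by
    ext B
    simp only [Set.mem_setOf_eq, and_iff_left_iff_imp]
    exact fun _ x _ => x.isLt
  rw [hF, hc] at key
  exact key
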